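/- Let q = 2^h, h > p, r ≥ p, and r ≤ m. The minimum Lee distance of the linear code ZRM_{2^h}^p(r,m) equals 2^{m-r+p}; that is, every nonzero codeword has Lee weight at least 2^{m-r+p}, and some nonzero codeword has Lee weight exactly 2^{m-r+p}. -/

import Mathlib

open Finset

/-- The binary expansion of `i`, as a point of `ℤ₂^m`. -/
def bits (m : ℕ) (i : ℕ) : Fin m → ZMod 2 := fun j => if Nat.testBit i j.val then 1 else 0

/-- Admissibility condition on ANF coefficients for `ZRM_{2^h}^p(r,m)`: monomials of order
at most `r - p` are free, a monomial of order `r - p + i` (for `1 ≤ i ≤ p`) must carry a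
coefficient divisible by `2^i`, and monomials of order exceeding `r` do not occur. -/
def zrmCond (h p r m : ℕ) (c : Finset (Fin m) → ZMod (2 ^ h)) : Prop :=
  ∀ S : Finset (Fin m),
    (r < S.card → c S = 0) ∧
    (r - p < S.card → S.card ≤ r →
      ∃ u : ZMod (2 ^ h), c S = 2 ^ (S.card - (r - p)) * u)

/-- The `ℤ_{2^h}`-valued vector of length `2^m` associated with the generalized Boolean
function with ANF coefficients `c` (monomials indexed by subsets of the variables). -/
def anfVec (h m : ℕ) (c : Finset (Fin m) → ZMod (2 ^ h)) : Fin (2 ^ m) → ZMod (2 ^ h) :=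
  fun i => ∑ S : Finset (Fin m), c S * ∏ α ∈ S, ((bits m i.val α).val : ZMod (2 ^ h))

/-- The code `ZRM_{2^h}^p(r,m)` as a set of vectors of length `2^m` over `ℤ_{2^h}`. -/
def ZRM (h p r m : ℕ) : Set (Fin (2 ^ m) → ZMod (2 ^ h)) :=
  {v | ∃ c : Finset (Fin m) → ZMod (2 ^ h), zrmCond h p r m c ∧ v = anfVec h m c}

/-- Hamming weight: the number of nonzero entries. -/
def wtH {n q : ℕ} (v : Fin n → ZMod q) : ℕ := (Finset.univ.filter fun i => v i ≠ 0).card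

/-- Lee weight: `∑ᵢ min(vᵢ, q - vᵢ)` with entries represented in `[0, q)`. -/
def wtL {n q : ℕ} (v : Fin n → ZMod q) : ℕ := ∑ i : Fin n, min (v i).val (q - (v i).val)

/-- Evaluation of a Boolean ANF. -/
def evalANF {m : ℕ} (g : Finset (Fin m) → ZMod 2) (x : Fin m → ZMod 2) : ZMod 2 :=
  ∑ S : Finset (Fin m), g S * ∏ α ∈ S, x α

lemma prodIndicator {m : ℕ} (T S : Finset (Fin m)) :
    (∏ α ∈ S, (if α ∈ T then (1 : ZMod 2) else 0)) = if S ⊆ T then 1 else 0 := by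
  by_cases hST : S ⊆ T
  · rw [if_pos hST]
    exact Finset.prod_eq_one fun α hα => if_pos (hST hα)
  · rw [if_neg hST]
    obtain ⟨α, hαS, hαT⟩ := Finset.not_subset.mp hST
    exact Finset.prod_eq_zero hαS (if_neg hαT)

lemma evalANF_indicator {m : ℕ} (g : Finset (Fin m) → ZMod 2) (T : Finset (Fin m)) :
    evalANF g (fun α => if α ∈ T then 1 else 0) = ∑ S ∈ T.powerset, g S := by
  unfold evalANF
  calc (∑ S : Finset (Fin m), g S * ∏ α ∈ S, (if α ∈ T then (1 : ZMod 2) else 0))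
      = ∑ S : Finset (Fin m), if S ⊆ T then g S else 0 := by
        apply Finset.sum_congr rfl
        intro S _
        rw [prodIndicator]
        by_cases hST : S ⊆ T
        · rw [if_pos hST, if_pos hST, mul_one]
        · rw [if_neg hST, if_neg hST, mul_zero]
    _ = ∑ S ∈ univ.filter (fun S : Finset (Fin m) => S ⊆ T), g S := (Finset.sum_filter _ _).symm
    _ = ∑ S ∈ T.powerset, g S := by
        congr 1
        ext S
        simp [Finset.mem_powerset]

lemma anf_zero_of_eval_zero {m : ℕ} (g : Finset (Fin m) → ZMod 2)
    (h0 : ∀ x, evalANF g x = 0) : g = 0 := by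
  have key : ∀ n (T : Finset (Fin m)), T.card = n → g T = 0 := by
    intro n
    induction n using Nat.strong_induction_on with
    | _ n ih =>
      intro T hT
      have h1 : ∑ S ∈ T.powerset, g S = 0 := by
        rw [← evalANF_indicator]; exact h0 _
      have h2 : ∑ S ∈ T.powerset.erase T, g S = 0 := by
        apply Finset.sum_eq_zero
        intro S hS
        rw [Finset.mem_erase, Finset.mem_powerset] at hS
        exact ih S.card (by rw [← hT]; exact Finset.card_lt_card (lt_of_le_of_ne hS.2 hS.1)) S rfl
      rw [← Finset.add_sum_erase _ _ (Finset.mem_powerset_self T), h2, add_zero] at h1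
      exact h1
  funext T
  exact key T.card T rfl

lemma exists_eval_ne_zero {m : ℕ} (g : Finset (Fin m) → ZMod 2) (hg : g ≠ 0) :
    ∃ x, evalANF g x ≠ 0 := by
  by_contra hx
  push_neg at hx
  exact hg (anf_zero_of_eval_zero g hx)

lemma card_pi_compl {m : ℕ} (K : Finset (Fin m)) :
    Fintype.card ({α : Fin m // α ∉ K} → ZMod 2) = 2 ^ (m - K.card) := by
  rw [Fintype.card_fun, ZMod.card]
  congr 1
  have h1 : Fintype.card {α : Fin m // ¬ α ∈ K} = Fintype.card (Fin m) - Fintype.card {α : Fin m // α ∈ K} :=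
    Fintype.card_subtype_compl _
  rw [h1, Fintype.card_coe, Fintype.card_fin]

lemma rm_bound {m : ℕ} (d : ℕ) (g : Finset (Fin m) → ZMod 2) (hg : g ≠ 0)
    (hdeg : ∀ S, d < S.card → g S = 0) :
    2 ^ (m - d) ≤ (univ.filter fun x : Fin m → ZMod 2 => evalANF g x ≠ 0).card := by
  classical
  have hne : (univ.filter fun S : Finset (Fin m) => g S ≠ 0).Nonempty := by
    rcases Function.ne_iff.mp hg with ⟨S, hS⟩
    exact ⟨S, Finset.mem_filter.mpr ⟨Finset.mem_univ _, by simpa using hS⟩⟩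
  obtain ⟨K, hKmem, hKmax⟩ := Finset.exists_max_image _ Finset.card hne
  rw [Finset.mem_filter] at hKmem
  have hgK : g K ≠ 0 := hKmem.2
  have hKd : K.card ≤ d := by
    by_contra hcon
    exact hgK (hdeg K (lt_of_not_ge hcon))
  -- main: per coset existence
  have main : ∀ y : Fin m → ZMod 2, ∃ x : Fin m → ZMod 2,
      (∀ α, α ∉ K → x α = y α) ∧ evalANF g x ≠ 0 := by
    intro y
    set gy : Finset (Fin m) → ZMod 2 := fun S =>
      if S ⊆ K then ∑ S' ∈ univ.filter (fun S' : Finset (Fin m) => S' ∩ K = S),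
        g S' * ∏ α ∈ S' \ K, y α else 0 with hgydef
    have hgyK : gy K = g K := by
      rw [hgydef]
      simp only [if_pos (Finset.Subset.refl K)]
      rw [Finset.sum_eq_single K]
      · rw [Finset.sdiff_self, Finset.prod_empty, mul_one]
      · intro S' hS' hne'
        rw [Finset.mem_filter] at hS'
        have hKS' : K ⊆ S' := by
          conv_lhs => rw [← hS'.2]
          exact Finset.inter_subset_left
        have : g S' = 0 := by
          by_contra hg0
          have hle := hKmax S' (Finset.mem_filter.mpr ⟨Finset.mem_univ _, hg0⟩)
          have hlt := Finset.card_lt_card (lt_of_le_of_ne hKS' (Ne.symm hne'))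
          omega
        rw [this, zero_mul]
      · intro habs
        simp at habs
    have hgyne : gy ≠ 0 := by
      intro h0
      exact hgK (by rw [← hgyK, h0, Pi.zero_apply])
    obtain ⟨x₁, hx₁⟩ := exists_eval_ne_zero gy hgyne
    set x : Fin m → ZMod 2 := fun α => if α ∈ K then x₁ α else y α with hxdef
    refine ⟨x, fun α hα => if_neg hα, ?_⟩
    -- evalANF g x = evalANF gy x
    have hB : evalANF g x = evalANF gy x := by
      unfold evalANF
      rw [← Finset.sum_fiberwise univ (fun S' : Finset (Fin m) => S' ∩ K)
        (fun S' => g S' * ∏ α ∈ S', x α)]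
      apply Finset.sum_congr rfl
      intro S _
      by_cases hSK : S ⊆ K
      · rw [hgydef]
        simp only [if_pos hSK]
        rw [Finset.sum_mul]
        apply Finset.sum_congr rfl
        intro S' hS'
        rw [Finset.mem_filter] at hS'
        have hunion : S' ∩ K ∪ S' \ K = S' := by
          ext a
          simp only [Finset.mem_union, Finset.mem_inter, Finset.mem_sdiff]
          tauto
        have hsplit : ∏ α ∈ S', x α = (∏ α ∈ S' ∩ K, x α) * ∏ α ∈ S' \ K, x α := by
          rw [← Finset.prod_union (Finset.disjoint_left.mpr
            (fun a ha hb => (Finset.mem_sdiff.mp hb).2 (Finset.mem_inter.mp ha).2)), hunion]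
        have hyy : ∏ α ∈ S' \ K, x α = ∏ α ∈ S' \ K, y α := by
          apply Finset.prod_congr rfl
          intro α hα
          exact if_neg (Finset.mem_sdiff.mp hα).2
        rw [hsplit, hyy, hS'.2]
        ring
      · rw [hgydef]
        simp only [if_neg hSK, zero_mul]
        apply Finset.sum_eq_zero
        intro S' hS'
        rw [Finset.mem_filter] at hS'
        exact absurd (hS'.2 ▸ Finset.inter_subset_right) hSK
    -- evalANF gy x = evalANF gy x₁
    have hA : evalANF gy x = evalANF gy x₁ := by
      unfold evalANF
      apply Finset.sum_congr rfl
      intro S _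
      by_cases hSK : S ⊆ K
      · congr 1
        apply Finset.prod_congr rfl
        intro α hα
        exact if_pos (hSK hα)
      · rw [hgydef]; simp only [if_neg hSK, zero_mul]
    rw [hB, hA]
    exact hx₁
  -- injection
  have main' : ∀ y : {α : Fin m // α ∉ K} → ZMod 2, ∃ x : Fin m → ZMod 2,
      (∀ (α : Fin m) (hα : α ∉ K), x α = y ⟨α, hα⟩) ∧ evalANF g x ≠ 0 := by
    intro y
    obtain ⟨x, hx1, hx2⟩ := main (fun α => if hα : α ∈ K then 0 else y ⟨α, hα⟩)
    exact ⟨x, fun α hα => by rw [hx1 α hα, dif_neg hα], hx2⟩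
  choose F hF1 hF2 using main'
  have hinj : Function.Injective
      (fun y : {α : Fin m // α ∉ K} → ZMod 2 => (⟨F y, hF2 y⟩ : {x // evalANF g x ≠ 0})) := by
    intro y y' hyy'
    have hval : F y = F y' := congrArg Subtype.val hyy'
    funext α
    rw [← hF1 y α.1 α.2, ← hF1 y' α.1 α.2, hval]
  have hcard := Fintype.card_le_of_injective _ hinj
  rw [card_pi_compl, Fintype.card_subtype] at hcard
  calc 2 ^ (m - d) ≤ 2 ^ (m - K.card) := Nat.pow_le_pow_right (by norm_num) (by omega)
    _ ≤ _ := hcard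

lemma bits_injective (m : ℕ) : Function.Injective (fun i : Fin (2 ^ m) => bits m i.val) := by
  intro i i' hii'
  apply Fin.ext
  apply Nat.eq_of_testBit_eq
  intro j
  by_cases hj : j < m
  · have hcf := congrFun hii' ⟨j, hj⟩
    simp only [bits] at hcf
    by_cases h1 : i.val.testBit j <;> by_cases h2 : i'.val.testBit j <;>
      simp only [h1, h2, if_true, if_false] at hcf ⊢
    · exact absurd hcf one_ne_zero
    · exact absurd hcf.symm one_ne_zero
  · have hb : ∀ k : ℕ, k < 2 ^ m → Nat.testBit k j = false := fun k hk =>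
      Nat.testBit_lt_two_pow (lt_of_lt_of_le hk (Nat.pow_le_pow_right (by norm_num) (le_of_not_gt hj)))
    rw [hb _ i.isLt, hb _ i'.isLt]

lemma bits_bijective (m : ℕ) : Function.Bijective (fun i : Fin (2 ^ m) => bits m i.val) := by
  rw [Fintype.bijective_iff_injective_and_card]
  refine ⟨bits_injective m, ?_⟩
  rw [Fintype.card_fin, Fintype.card_fun, ZMod.card, Fintype.card_fin]

lemma card_filter_bits (m : ℕ) (PP : (Fin m → ZMod 2) → Prop) [DecidablePred PP] :
    (univ.filter fun i : Fin (2 ^ m) => PP (bits m i.val)).card = (univ.filter PP).card := by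
  calc (univ.filter fun i : Fin (2 ^ m) => PP (bits m i.val)).card
      = Fintype.card {i : Fin (2 ^ m) // PP (bits m i.val)} := (Fintype.card_subtype _).symm
    _ = Fintype.card {x : Fin m → ZMod 2 // PP x} :=
        Fintype.card_congr ((Equiv.ofBijective _ (bits_bijective m)).subtypeEquiv fun i => Iff.rfl)
    _ = (univ.filter PP).card := Fintype.card_subtype _

lemma card_pi_compl' {m : ℕ} (K : Finset (Fin m)) :
    Fintype.card ({α : Fin m // α ∉ K} → ZMod 2) = 2 ^ (m - K.card) := by
  rw [Fintype.card_fun, ZMod.card]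
  congr 1
  have h1 : Fintype.card {α : Fin m // ¬ α ∈ K} =
      Fintype.card (Fin m) - Fintype.card {α : Fin m // α ∈ K} := Fintype.card_subtype_compl _
  rw [h1, Fintype.card_coe, Fintype.card_fin]

lemma card_forced {m : ℕ} (K : Finset (Fin m)) :
    (univ.filter fun x : Fin m → ZMod 2 => ∀ α ∈ K, x α = 1).card = 2 ^ (m - K.card) := by
  rw [← Fintype.card_subtype, ← card_pi_compl' K]
  apply Fintype.card_congr
  refine
    { toFun := fun x α => x.1 α.1
      invFun := fun y => ⟨fun α => if hα : α ∈ K then 1 else y ⟨α, hα⟩, fun α hα => dif_pos hα⟩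
      left_inv := ?_
      right_inv := ?_ }
  · intro x
    apply Subtype.ext
    funext α
    dsimp only
    by_cases hα : α ∈ K
    · rw [dif_pos hα, x.2 α hα]
    · rw [dif_neg hα]
  · intro y
    funext α
    dsimp only
    rw [dif_neg α.2]

/-- The minimum Lee distance of the linear code `ZRM_{2^h}^p(r,m)` equals `2^{m-r+p}`. -/
theorem stmt_7 (h p r m : ℕ) (hph : p < h) (hpr : p ≤ r) (hrm : r ≤ m) :
    (∀ v ∈ ZRM h p r m, v ≠ 0 → 2 ^ (m - r + p) ≤ wtL v) ∧
    (∃ v ∈ ZRM h p r m, v ≠ 0 ∧ wtL v = 2 ^ (m - r + p)) := by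
  constructor
  ·  classical
    haveI : NeZero (2 ^ h) := ⟨(pow_pos (by norm_num : (0:ℕ) < 2) h).ne'⟩
    intro v hv hv0
    obtain ⟨c, hcond, rfl⟩ := hv
    have hc : c ≠ 0 := by
      rintro rfl
      apply hv0
      funext i
      simp [anfVec]
    -- the valuation t
    set P : ℕ → Prop := fun τ => ∀ S, 2 ^ τ ∣ (c S).val with hPdef
    have hP0 : P 0 := fun S => one_dvd _
    have hPh : ¬ P h := by
      intro hPh
      obtain ⟨S₁, hS₁⟩ := Function.ne_iff.mp hc
      have h1 : (c S₁).val ≠ 0 := by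
        intro h0
        exact hS₁ (by simpa using (ZMod.val_eq_zero (c S₁)).mp h0)
      have h2 := ZMod.val_lt (c S₁)
      have h3 := Nat.le_of_dvd (Nat.pos_of_ne_zero h1) (hPh S₁)
      omega
    set t := Nat.findGreatest P h with htdef
    have hPt : P t := Nat.findGreatest_spec (Nat.zero_le h) hP0
    have hth : t < h := lt_of_le_of_ne (Nat.findGreatest_le h) (fun he => hPh (he ▸ hPt))
    have hPt1 : ¬ P (t + 1) := Nat.findGreatest_is_greatest (Nat.lt_succ_self t) hth
    obtain ⟨S₂, hS₂⟩ : ∃ S, ¬ 2 ^ (t + 1) ∣ (c S).val := by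
      rw [hPdef] at hPt1
      exact not_forall.mp hPt1
    -- the Boolean ANF g
    set g : Finset (Fin m) → ZMod 2 := fun S => (((c S).val / 2 ^ t : ℕ) : ZMod 2) with hgdef
    have hdvd_iff : ∀ S, g S = 0 ↔ 2 ^ (t + 1) ∣ (c S).val := by
      intro S
      rw [hgdef]
      constructor
      · intro h0
        have h2 : (2 : ℕ) ∣ (c S).val / 2 ^ t := (ZMod.natCast_eq_zero_iff _ 2).mp h0
        have := (Nat.dvd_div_iff_mul_dvd (hPt S)).mp h2
        rwa [← pow_succ] at this
      · intro hdv
        apply (ZMod.natCast_eq_zero_iff _ 2).mpr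
        apply (Nat.dvd_div_iff_mul_dvd (hPt S)).mpr
        rwa [← pow_succ]
    have hgne : g ≠ 0 := by
      intro h0
      exact hS₂ ((hdvd_iff S₂).mp (by rw [h0, Pi.zero_apply]))
    have hdeg : ∀ S, (r - p) + t < S.card → g S = 0 := by
      intro S hS
      apply (hdvd_iff S).mpr
      by_cases hSr : r < S.card
      · rw [(hcond S).1 hSr, ZMod.val_zero]
        exact dvd_zero _
      · obtain ⟨u, hu⟩ := (hcond S).2 (by omega) (le_of_not_gt hSr)
        have hj : t + 1 ≤ S.card - (r - p) := by omega
        have hcast : ((2 : ZMod (2 ^ h)) ^ (S.card - (r - p)) * u)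
            = (((2 ^ (S.card - (r - p)) * u.val : ℕ)) : ZMod (2 ^ h)) := by
          push_cast [ZMod.natCast_val, ZMod.cast_id]
          ring
        rw [hu, hcast, ZMod.val_natCast]
        apply (Nat.dvd_mod_iff (pow_dvd_pow 2 (by omega : t + 1 ≤ h))).mpr
        exact Dvd.dvd.mul_right (pow_dvd_pow 2 hj) _
    -- numeric decomposition of entries
    set M : Fin (2 ^ m) → ℕ :=
      fun i => ∑ S : Finset (Fin m), ((c S).val / 2 ^ t) * ∏ α ∈ S, (bits m i.val α).val
      with hMdef
    have hNat : ∀ i, (2 ^ t * M i : ℕ)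
        = ∑ S : Finset (Fin m), (c S).val * ∏ α ∈ S, (bits m i.val α).val := by
      intro i
      rw [hMdef, Finset.mul_sum]
      apply Finset.sum_congr rfl
      intro S _
      rw [← mul_assoc, Nat.mul_div_cancel' (hPt S)]
    have hcast : ∀ i, anfVec h m c i
        = (((∑ S : Finset (Fin m), (c S).val * ∏ α ∈ S, (bits m i.val α).val : ℕ)) : ZMod (2 ^ h)) := by
      intro i
      unfold anfVec
      push_cast [ZMod.natCast_val, ZMod.cast_id]
      rfl
    have h2h : (2 : ℕ) ^ h = 2 ^ t * 2 ^ (h - t) := by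
      rw [← pow_add]
      congr 1
      omega
    have hvval : ∀ i, (anfVec h m c i).val = 2 ^ t * (M i % 2 ^ (h - t)) := by
      intro i
      rw [hcast i, ← hNat i, ZMod.val_natCast, h2h, Nat.mul_mod_mul_left]
    have hM2 : ∀ i, ((M i : ℕ) : ZMod 2) = evalANF g (bits m i.val) := by
      intro i
      rw [hMdef]
      unfold evalANF
      push_cast
      apply Finset.sum_congr rfl
      intro S _
      congr 1
      apply Finset.prod_congr rfl
      intro α _
      rw [ZMod.natCast_val, ZMod.cast_id]
    -- pointwise Lee bound
    have hLee : ∀ i : Fin (2 ^ m), evalANF g (bits m i.val) ≠ 0 →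
        2 ^ t ≤ min (anfVec h m c i).val (2 ^ h - (anfVec h m c i).val) := by
      intro i hne
      have hModd : ¬ (2 : ℕ) ∣ M i := by
        intro h2
        exact hne (by rw [← hM2 i]; exact (ZMod.natCast_eq_zero_iff _ 2).mpr h2)
      have hM'odd : ¬ (2 : ℕ) ∣ M i % 2 ^ (h - t) := by
        intro h2
        exact hModd ((Nat.dvd_mod_iff (dvd_pow_self 2 (by omega : h - t ≠ 0))).mp h2)
      have h1 : 1 ≤ M i % 2 ^ (h - t) :=
        Nat.pos_of_ne_zero (fun h0 => hM'odd (h0 ▸ dvd_zero 2))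
      have h2 : M i % 2 ^ (h - t) < 2 ^ (h - t) :=
        Nat.mod_lt _ (pow_pos (by norm_num : (0:ℕ) < 2) _)
      rw [hvval i]
      apply le_min
      · calc (2 : ℕ) ^ t = 2 ^ t * 1 := (mul_one _).symm
          _ ≤ 2 ^ t * (M i % 2 ^ (h - t)) := Nat.mul_le_mul_left _ h1
      · rw [h2h, Nat.le_sub_iff_add_le (Nat.mul_le_mul_left _ (le_of_lt h2))]
        calc 2 ^ t + 2 ^ t * (M i % 2 ^ (h - t)) = 2 ^ t * ((M i % 2 ^ (h - t)) + 1) := by ring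
          _ ≤ 2 ^ t * 2 ^ (h - t) := Nat.mul_le_mul_left _ (by omega)
    -- count and sum
    set A : Finset (Fin (2 ^ m)) :=
      univ.filter fun i : Fin (2 ^ m) => evalANF g (bits m i.val) ≠ 0 with hAdef
    have hAcard : 2 ^ (m - ((r - p) + t)) ≤ A.card := by
      rw [hAdef, card_filter_bits m (fun x => evalANF g x ≠ 0)]
      exact rm_bound _ g hgne hdeg
    calc (2 : ℕ) ^ (m - r + p) ≤ 2 ^ t * 2 ^ (m - ((r - p) + t)) := by
          rw [← pow_add]
          exact Nat.pow_le_pow_right (by norm_num) (by omega)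
      _ ≤ 2 ^ t * A.card := Nat.mul_le_mul_left _ hAcard
      _ = A.card * 2 ^ t := mul_comm _ _
      _ ≤ ∑ i ∈ A, min (anfVec h m c i).val (2 ^ h - (anfVec h m c i).val) := by
          have := Finset.card_nsmul_le_sum A
            (fun i => min (anfVec h m c i).val (2 ^ h - (anfVec h m c i).val)) (2 ^ t)
            (fun i hi => hLee i (by rw [hAdef] at hi; exact (Finset.mem_filter.mp hi).2))
          simpa [smul_eq_mul] using this
      _ ≤ wtL (anfVec h m c) := by
          unfold wtL
          exact Finset.sum_le_sum_of_subset (Finset.subset_univ A)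

  ·  classical
    haveI : NeZero (2 ^ h) := ⟨(pow_pos (by norm_num : (0:ℕ) < 2) h).ne'⟩
    haveI : Fact (1 < 2 ^ h) := ⟨by
      calc 1 < 2 ^ 1 := by norm_num
        _ ≤ 2 ^ h := Nat.pow_le_pow_right (by norm_num) (by omega)⟩
    have hlt2p : 2 ^ p < 2 ^ h := Nat.pow_lt_pow_right (by norm_num) hph
    -- concrete S₀
    have hbnd : ∀ k ∈ Finset.range r, k < m := fun k hk => lt_of_lt_of_le (Finset.mem_range.mp hk) hrm
    set S₀ : Finset (Fin m) := (Finset.range r).attachFin hbnd with hS₀def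
    have hS₀card : S₀.card = r := by rw [hS₀def, Finset.card_attachFin, Finset.card_range]
    have hS₀mem : ∀ j : Fin m, j ∈ S₀ ↔ (j : ℕ) < r := by
      intro j; rw [hS₀def, Finset.mem_attachFin, Finset.mem_range]
    set c₀ : Finset (Fin m) → ZMod (2 ^ h) := fun S => if S = S₀ then (2 ^ p : ZMod (2 ^ h)) else 0
      with hc₀def
    have hv : ∀ i : Fin (2 ^ m), anfVec h m c₀ i
        = 2 ^ p * ∏ α ∈ S₀, ((bits m i.val α).val : ZMod (2 ^ h)) := by
      intro i
      unfold anfVec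
      rw [Finset.sum_eq_single S₀]
      · simp only [hc₀def]; rw [if_true]
      · intro S _ hne; simp only [hc₀def]; simp only [if_neg hne, zero_mul]
      · intro habs; exact absurd (Finset.mem_univ S₀) habs
    have hval2p : ((2 : ZMod (2 ^ h)) ^ p).val = 2 ^ p := by
      have hcast : ((2 : ZMod (2 ^ h)) ^ p) = ((2 ^ p : ℕ) : ZMod (2 ^ h)) := by push_cast; ring
      rw [hcast, ZMod.val_natCast, Nat.mod_eq_of_lt hlt2p]
    have h2pne : (2 : ZMod (2 ^ h)) ^ p ≠ 0 := by
      intro h0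
      have : ((2 : ZMod (2 ^ h)) ^ p).val = 0 := by rw [h0, ZMod.val_zero]
      rw [hval2p] at this
      exact (pow_pos (by norm_num : (0:ℕ) < 2) p).ne' this
    refine ⟨anfVec h m c₀, ⟨c₀, ?_, rfl⟩, ?_, ?_⟩
    · -- zrmCond
      intro S
      constructor
      · intro hrS
        simp only [hc₀def]
        by_cases hS : S = S₀
        · exfalso; rw [hS, hS₀card] at hrS; omega
        · simp only [if_neg hS]
      · intro _ _
        by_cases hS : S = S₀
        · refine ⟨1, ?_⟩
          simp only [hc₀def, hS]
          rw [if_true]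
          rw [hS₀card, Nat.sub_sub_self hpr, mul_one]
        · exact ⟨0, by simp only [hc₀def, if_neg hS, mul_zero]⟩
    · -- nonzero
      intro h0
      have hi₀lt : 2 ^ r - 1 < 2 ^ m := by
        have := Nat.pow_le_pow_right (by norm_num : 1 ≤ 2) hrm
        have := pow_pos (by norm_num : (0:ℕ) < 2) r
        omega
      set i₀ : Fin (2 ^ m) := ⟨2 ^ r - 1, hi₀lt⟩ with hi₀def
      have := congrFun h0 i₀
      rw [hv i₀, Pi.zero_apply] at this
      have hprod : ∏ α ∈ S₀, ((bits m i₀.val α).val : ZMod (2 ^ h)) = 1 := by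
        apply Finset.prod_eq_one
        intro α hα
        have hαr : (α : ℕ) < r := (hS₀mem α).mp hα
        have hbit : Nat.testBit (2 ^ r - 1) (α : ℕ) = true := by
          rw [Nat.testBit_two_pow_sub_one]
          exact decide_eq_true hαr
        unfold bits
        rw [hi₀def]
        simp only [hbit, if_true]
        rw [ZMod.val_one, Nat.cast_one]
      rw [hprod, mul_one] at this
      exact h2pne this
    · -- Lee weight
      have hterm : ∀ i : Fin (2 ^ m),
          min (anfVec h m c₀ i).val (2 ^ h - (anfVec h m c₀ i).val)
            = if (∀ α ∈ S₀, bits m i.val α = 1) then 2 ^ p else 0 := by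
        intro i
        rw [hv i]
        by_cases hQ : ∀ α ∈ S₀, bits m i.val α = 1
        · rw [if_pos hQ]
          have hprod : ∏ α ∈ S₀, ((bits m i.val α).val : ZMod (2 ^ h)) = 1 := by
            apply Finset.prod_eq_one
            intro α hα
            rw [hQ α hα, ZMod.val_one, Nat.cast_one]
          rw [hprod, mul_one, hval2p]
          apply min_eq_left
          have hs : 2 ^ (p + 1) ≤ 2 ^ h := Nat.pow_le_pow_right (by norm_num) (by omega)
          rw [pow_succ] at hs
          omega
        · rw [if_neg hQ]
          push_neg at hQ
          obtain ⟨α, hα, hne⟩ := hQ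
          have hb0 : bits m i.val α = 0 := by
            unfold bits at hne ⊢
            by_cases ht : Nat.testBit i.val (α : ℕ)
            · exact absurd (if_pos ht) hne
            · rw [if_neg ht]
          have hprod : ∏ α ∈ S₀, ((bits m i.val α).val : ZMod (2 ^ h)) = 0 :=
            Finset.prod_eq_zero hα (by rw [hb0, ZMod.val_zero, Nat.cast_zero])
          rw [hprod, mul_zero, ZMod.val_zero]
          simp
      unfold wtL
      calc (∑ i : Fin (2 ^ m), min (anfVec h m c₀ i).val (2 ^ h - (anfVec h m c₀ i).val))
          = ∑ i : Fin (2 ^ m), (if (∀ α ∈ S₀, bits m i.val α = 1) then 2 ^ p else 0) :=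
            Finset.sum_congr rfl fun i _ => hterm i
        _ = ∑ i ∈ univ.filter (fun i : Fin (2 ^ m) => ∀ α ∈ S₀, bits m i.val α = 1), 2 ^ p :=
            (Finset.sum_filter _ _).symm
        _ = (univ.filter (fun i : Fin (2 ^ m) => ∀ α ∈ S₀, bits m i.val α = 1)).card * 2 ^ p := by
            rw [Finset.sum_const, smul_eq_mul]
        _ = 2 ^ (m - r) * 2 ^ p := by
            rw [card_filter_bits m (fun x => ∀ α ∈ S₀, x α = 1), card_forced, hS₀card]
        _ = 2 ^ (m - r + p) := by rw [← pow_add]
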